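/- arXiv:2604.23234 — 12 statements merged into one kernel-verified Lean document; each statement's English description precedes it below -/
import Mathlib

section
/- Let X be a set, i an interior operator on X, and d a T_d-derivative operator on X satisfying the ◇-regularity condition d ∘ i = i ∘ d ∘ i. Then for all i-open sets A, B ⊆ X: i(d(A ∪ B)) = i(d(A)) ∪ i(d(B)). (This is Proposition 4.2(1): every ◇-regular polyderivative CK4-space validates the axiom DP: ◇(φ∨ψ) → ◇φ ∨ ◇ψ.) -/
/-- Proposition 4.2(1): every ◇-regular polyderivative CK4-space validates DP:
for `i`-open sets `A`, `B`, `i (d (A ∪ B)) = i (d A) ∪ i (d B)`. -/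
theorem validates_DP {X : Type*} (i d : Set X → Set X)
    -- `i` is an interior operator
    (hi_univ : i Set.univ = Set.univ)
    (hi_inter : ∀ A B : Set X, i (A ∩ B) = i A ∩ i B)
    (hi_idem : ∀ A : Set X, i A ⊆ i (i A))
    (hi_le : ∀ A : Set X, i A ⊆ A)
    -- `d` is a `T_d`-derivative operator
    (hd_empty : d ∅ = ∅)
    (hd_union : ∀ A B : Set X, d (A ∪ B) = d A ∪ d B)
    (hd_idem : ∀ A : Set X, d (d A) ⊆ d A)
    -- ◇-regularity
    (hreg : ∀ A : Set X, d (i A) = i (d (i A))) :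
    ∀ A B : Set X, i A = A → i B = B → i (d (A ∪ B)) = i (d A) ∪ i (d B) := by
  have hmono : ∀ S T : Set X, S ⊆ T → i S ⊆ i T := by
    intro S T hST
    have : S ∩ T = S := Set.inter_eq_left.mpr hST
    calc i S = i (S ∩ T) := by rw [this]
      _ = i S ∩ i T := hi_inter S T
      _ ⊆ i T := Set.inter_subset_right
  intro A B hA hB
  have hAB : i (A ∪ B) = A ∪ B := by
    apply Set.Subset.antisymm (hi_le _)
    apply Set.union_subset
    · exact hA.symm.trans_subset (hmono A (A ∪ B) Set.subset_union_left)
    · exact hB.symm.trans_subset (hmono B (A ∪ B) Set.subset_union_right)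
  have hdAB : d (A ∪ B) = i (d (A ∪ B)) := by
    have := hreg (A ∪ B); rwa [hAB] at this
  have hdA : d A = i (d A) := by have := hreg A; rwa [hA] at this
  have hdB : d B = i (d B) := by have := hreg B; rwa [hB] at this
  rw [← hdAB, ← hdA, ← hdB, hd_union]
end

section
/- Let X be a set, i an interior operator on X, d a T_d-derivative operator on X with dual integral operator e_◇ (given by e_◇(A) = X ∖ d(X ∖ A)), and E an integral operator on X. Assume: (a) ◇-regularity, d ∘ i = i ∘ d ∘ i; (b) ◇-coarseness, i ∘ e_◇ = E ∘ i; and (c) E(A) ⊆ e_◇(A) for all A ⊆ X. Then for all i-open sets A, B ⊆ X: i((X ∖ i(d(A))) ∪ E(B)) ⊆ E(i((X ∖ A) ∪ B)). (This is Proposition 4.2(2): every ◇-regular, ◇-coarse polyderivative CK4-space validates the Fischer Servi axiom FS: (◇φ→□ψ) → □(φ→ψ).) -/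
/-- Proposition 4.2(2): every ◇-regular, ◇-coarse polyderivative CK4-space
validates the Fischer Servi axiom FS.  Here `E` plays the role of `e_□` and
`fun A => (d Aᶜ)ᶜ` is the dual integral operator `e_◇` of `d`. -/
theorem validates_FS {X : Type*} (i d E : Set X → Set X)
    -- `i` is an interior operator
    (hi_univ : i Set.univ = Set.univ)
    (hi_inter : ∀ A B : Set X, i (A ∩ B) = i A ∩ i B)
    (hi_idem : ∀ A : Set X, i A ⊆ i (i A))
    (hi_le : ∀ A : Set X, i A ⊆ A)
    -- `d` is a `T_d`-derivative operator
    (hd_empty : d ∅ = ∅)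
    (hd_union : ∀ A B : Set X, d (A ∪ B) = d A ∪ d B)
    (hd_idem : ∀ A : Set X, d (d A) ⊆ d A)
    -- `E` is an integral operator
    (hE_univ : E Set.univ = Set.univ)
    (hE_inter : ∀ A B : Set X, E (A ∩ B) = E A ∩ E B)
    (hE_idem : ∀ A : Set X, E A ⊆ E (E A))
    -- (a) ◇-regularity
    (hreg : ∀ A : Set X, d (i A) = i (d (i A)))
    -- (b) ◇-coarseness: `i ∘ e_◇ = E ∘ i`
    (hcoarse : ∀ A : Set X, i ((d Aᶜ)ᶜ) = E (i A))
    -- (c) `E A ⊆ e_◇ A`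
    (hEsub : ∀ A : Set X, E A ⊆ (d Aᶜ)ᶜ) :
    ∀ A B : Set X, i A = A → i B = B →
      i ((i (d A))ᶜ ∪ E B) ⊆ E (i (Aᶜ ∪ B)) := by

  intro A B hA hB
  have hmono_i : ∀ {S T : Set X}, S ⊆ T → i S ⊆ i T := by
    intro S T h
    have h2 := hi_inter S T
    rw [Set.inter_eq_self_of_subset_left h] at h2
    rw [h2]; exact Set.inter_subset_right
  have hmono_d : ∀ {S T : Set X}, S ⊆ T → d S ⊆ d T := by
    intro S T h
    have h2 := hd_union S T
    rw [Set.union_eq_self_of_subset_left h] at h2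
    rw [h2]
    exact Set.subset_union_left
  have hidem : ∀ S : Set X, i (i S) = i S :=
    fun S => Set.Subset.antisymm (hi_le _) (hi_idem S)
  have hdA : i (d A) = d A := by
    have h := hreg A
    rw [hA] at h
    exact h.symm
  rw [hdA]
  have hc : (Aᶜ ∪ B)ᶜ = A ∩ Bᶜ := by rw [Set.compl_union, compl_compl]
  have hsub : i ((d A)ᶜ ∪ E B) ⊆ (d ((Aᶜ ∪ B)ᶜ))ᶜ := by
    intro x hx hxd
    rw [hc] at hxd
    rcases hi_le _ hx with hx' | hx'
    · exact hx' (hmono_d Set.inter_subset_left hxd)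
    · exact hEsub B hx' (hmono_d Set.inter_subset_right hxd)
  calc i ((d A)ᶜ ∪ E B) = i (i ((d A)ᶜ ∪ E B)) := (hidem _).symm
    _ ⊆ i ((d ((Aᶜ ∪ B)ᶜ))ᶜ) := hmono_i hsub
    _ = E (i (Aᶜ ∪ B)) := hcoarse _
end

section
/- Let X be a set, i an interior operator on X, d a T_d-derivative operator on X with dual integral operator e_◇ (given by e_◇(A) = X ∖ d(X ∖ A)), and E an integral operator on X. Assume: (a) ◇-regularity, d ∘ i = i ∘ d ∘ i; and (b) □-regularity, e_◇ ∘ i = E ∘ i. Then for all i-open sets A, B ⊆ X: E(A ∪ B) ⊆ E(A) ∪ i(d(B)). (This is Proposition 4.2(3): every □-regular and ◇-regular polyderivative CK4-space validates the Rodríguez–Vidal axiom RV: □(φ∨ψ) → □φ ∨ ◇ψ.) -/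
/-- Proposition 4.2(3): every □-regular and ◇-regular polyderivative
CK4-space validates the Rodríguez–Vidal axiom RV.  Here `E` plays the role of `e_□` and
`fun A => (d Aᶜ)ᶜ` is the dual integral operator `e_◇` of `d`. -/
theorem validates_RV {X : Type*} (i d E : Set X → Set X)
    -- `i` is an interior operator
    (hi_univ : i Set.univ = Set.univ)
    (hi_inter : ∀ A B : Set X, i (A ∩ B) = i A ∩ i B)
    (hi_idem : ∀ A : Set X, i A ⊆ i (i A))
    (hi_le : ∀ A : Set X, i A ⊆ A)
    -- `d` is a `T_d`-derivative operator
    (hd_empty : d ∅ = ∅)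
    (hd_union : ∀ A B : Set X, d (A ∪ B) = d A ∪ d B)
    (hd_idem : ∀ A : Set X, d (d A) ⊆ d A)
    -- `E` is an integral operator
    (hE_univ : E Set.univ = Set.univ)
    (hE_inter : ∀ A B : Set X, E (A ∩ B) = E A ∩ E B)
    (hE_idem : ∀ A : Set X, E A ⊆ E (E A))
    -- (a) ◇-regularity
    (hreg : ∀ A : Set X, d (i A) = i (d (i A)))
    -- (b) □-regularity: `e_◇ ∘ i = E ∘ i`
    (hbox : ∀ A : Set X, (d (i A)ᶜ)ᶜ = E (i A)) :
    ∀ A B : Set X, i A = A → i B = B → E (A ∪ B) ⊆ E A ∪ i (d B) := by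
  intro A B hA hB
  have himono : ∀ C D : Set X, C ⊆ D → i C ⊆ i D := fun C D h => by
    have hCD : C ∩ D = C := Set.inter_eq_left.mpr h
    calc i C = i (C ∩ D) := by rw [hCD]
      _ = i C ∩ i D := hi_inter C D
      _ ⊆ i D := Set.inter_subset_right
  have hopen : i (A ∪ B) = A ∪ B := by
    refine le_antisymm (hi_le _) (Set.union_subset ?_ ?_)
    · calc A = i A := hA.symm
        _ ⊆ i (A ∪ B) := himono A (A ∪ B) Set.subset_union_left
    · calc B = i B := hB.symm
        _ ⊆ i (A ∪ B) := himono B (A ∪ B) Set.subset_union_right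
  have hdB : i (d B) = d B := by
    have h := hreg B
    rw [hB] at h
    exact h.symm
  have hEAB : (d (A ∪ B)ᶜ)ᶜ = E (A ∪ B) := by
    have h := hbox (A ∪ B); rwa [hopen] at h
  have hEA : (d Aᶜ)ᶜ = E A := by
    have h := hbox A; rwa [hA] at h
  rw [← hEAB, ← hEA, hdB]
  have hsub : Aᶜ ⊆ (A ∪ B)ᶜ ∪ B := by
    intro x hx
    by_cases hxB : x ∈ B
    · exact Or.inr hxB
    · exact Or.inl (by simp [hx, hxB])
  have hmono : d Aᶜ ⊆ d ((A ∪ B)ᶜ) ∪ d B := by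
    have : d Aᶜ ⊆ d ((A ∪ B)ᶜ ∪ B) := by
      intro x hx
      have : Aᶜ ∪ ((A ∪ B)ᶜ ∪ B) = (A ∪ B)ᶜ ∪ B := Set.union_eq_right.mpr hsub
      have h2 := hd_union (Aᶜ) ((A ∪ B)ᶜ ∪ B)
      rw [this] at h2
      exact h2 ▸ Or.inl hx
    rwa [hd_union] at this
  intro x hx
  by_cases hxA : x ∈ d Aᶜ
  · rcases hmono hxA with h | h
    · exact absurd h hx
    · exact Or.inr h
  · exact Or.inl hxA
end

section
/- Let ≼ be a preorder and ⊏ a transitive relation on a set W, and suppose the pair is backward confluent: whenever w ⊏ v and v ≼ v', there is w' with w ≼ w' ⊏ v'. Then the composite relation (≼;⊏) is transitive; consequently the transitive closure of (≼;⊏) equals (≼;⊏). (Lemma 5.4(1).) -/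
/-- Lemma 5.4(1): if `≼` is a preorder, `⊏` is transitive, and the pair is
backward confluent, then the composite `(≼;⊏)` is transitive; consequently its transitive
closure equals `(≼;⊏)` itself. -/
theorem backward_confluent_comp_trans {W : Type*} (pre mod : W → W → Prop)
    (hpre_refl : ∀ w, pre w w)
    (hpre_trans : ∀ {a b c}, pre a b → pre b c → pre a c)
    (hmod_trans : ∀ {a b c}, mod a b → mod b c → mod a c)
    (hback : ∀ {w v v'}, mod w v → pre v v' → ∃ w', pre w w' ∧ mod w' v') :
    (∀ {a b c}, (∃ u, pre a u ∧ mod u b) → (∃ u, pre b u ∧ mod u c) →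
      (∃ u, pre a u ∧ mod u c))
    ∧ (∀ a b, Relation.TransGen (fun x y => ∃ u, pre x u ∧ mod u y) a b ↔
        ∃ u, pre a u ∧ mod u b) := by
  have htrans : ∀ {a b c}, (∃ u, pre a u ∧ mod u b) → (∃ u, pre b u ∧ mod u c) →
      (∃ u, pre a u ∧ mod u c) := by
    rintro a b c ⟨u, hau, hub⟩ ⟨v, hbv, hvc⟩
    obtain ⟨w', huw', hw'v⟩ := hback hub hbv
    exact ⟨w', hpre_trans hau huw', hmod_trans hw'v hvc⟩
  refine ⟨@htrans, fun a b => ⟨fun h => ?_, fun h => Relation.TransGen.single h⟩⟩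
  induction h with
  | single h => exact h
  | tail _ h ih => exact htrans ih h
end

section
/- Let ≼ be a preorder and ⊏ a reflexive transitive relation on a set W, and suppose the pair is downward confluent: whenever w ≼ v and v ⊏ v', there is w' with w ⊏ w' ≼ v'. Then the transitive closure of the composite (≼;⊏) equals the composite (⊏;≼). (Lemma 5.4(2), in the setting of CS4-frames where ⊏ is reflexive.) -/
/-- Lemma 5.4(2), for reflexive `⊏`: if `≼` is a preorder, `⊏` is reflexive
and transitive, and the pair is downward confluent, then the transitive closure of the
composite `(≼;⊏)` equals the composite `(⊏;≼)`. -/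
theorem downward_confluent_transGen_eq {W : Type*} (pre mod : W → W → Prop)
    (hpre_refl : ∀ w, pre w w)
    (hpre_trans : ∀ {a b c}, pre a b → pre b c → pre a c)
    (hmod_refl : ∀ w, mod w w)
    (hmod_trans : ∀ {a b c}, mod a b → mod b c → mod a c)
    (hdown : ∀ {w v v'}, pre w v → mod v v' → ∃ w', mod w w' ∧ pre w' v') :
    ∀ a b, Relation.TransGen (fun x y => ∃ u, pre x u ∧ mod u y) a b ↔
      ∃ u, mod a u ∧ pre u b := by
  intro a b
  constructor
  · intro h
    induction h with
    | single h =>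
      obtain ⟨u, hpu, hmu⟩ := h
      obtain ⟨w', hw1, hw2⟩ := hdown hpu hmu
      exact ⟨w', hw1, hw2⟩
    | tail _ h ih =>
      obtain ⟨u, hmu, hpu⟩ := ih
      obtain ⟨v, hpv, hmv⟩ := h
      obtain ⟨w', hw1, hw2⟩ := hdown (hpre_trans hpu hpv) hmv
      exact ⟨w', hmod_trans hmu hw1, hw2⟩
  · rintro ⟨u, hmu, hpu⟩
    exact Relation.TransGen.head ⟨a, hpre_refl a, hmu⟩
      (Relation.TransGen.single ⟨b, hpu, hmod_refl b⟩)
end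

section
/- Let R be an irreflexive and transitive relation on a set X, and equip X with the Alexandroff topology τ_R whose open sets are exactly the R-upward closed sets. Then for every A ⊆ X, the derived set of A (the set of accumulation points of A, i.e. {x : x ∈ closure(A ∖ {x})}) equals {w ∈ X : ∃v ∈ A, w R v}. (This identifies the relational derivative of an irreflexive transitive frame with the Cantor derivative of its associated Alexandroff space, as used in Proposition 6.5(2).) -/
/-- The Alexandroff topology `τ_R` associated with a relation `R`: the open sets
are exactly the `R`-upward closed sets. -/
def upTop {X : Type*} (R : X → X → Prop) : TopologicalSpace X where
  IsOpen U := ∀ ⦃w v⦄, w ∈ U → R w v → v ∈ U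
  isOpen_univ := fun _ _ _ _ => trivial
  isOpen_inter := fun _ _ hU hV _ _ hw hr => ⟨hU hw.1 hr, hV hw.2 hr⟩
  isOpen_sUnion := fun _ hS _ _ hw hr => by
    obtain ⟨U, hU, hwU⟩ := hw
    exact ⟨U, hU, hS U hU hwU hr⟩

/-- for an irreflexive transitive relation `R`, the derived set of `A`
(the set of points `x` with `x ∈ closure (A \ {x})`) in the Alexandroff space
`(X, τ_R)` equals `{w | ∃ v ∈ A, R w v}`. -/
theorem derivedSet_upTop {X : Type*} (R : X → X → Prop)
    (hirrefl : ∀ x, ¬ R x x)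
    (htrans : ∀ {a b c}, R a b → R b c → R a c) :
    ∀ A : Set X, {x | x ∈ @closure X (upTop R) (A \ {x})} = {w | ∃ v ∈ A, R w v} := by
  intro A
  ext x
  simp only [Set.mem_setOf_eq]
  rw [@mem_closure_iff X (upTop R) x (A \ {x})]
  constructor
  · intro h
    have hUopen : @IsOpen X (upTop R) ({x} ∪ {v | R x v}) := by
      intro w v hw hr
      rcases hw with hw | hw
      · right
        rw [Set.mem_singleton_iff] at hw
        subst hw
        exact hr
      · right
        exact htrans hw hr
    obtain ⟨v, hvU, hvA, hvx⟩ := h _ hUopen (Or.inl rfl)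
    rcases hvU with hv | hv
    · exact absurd hv hvx
    · exact ⟨v, hvA, hv⟩
  · rintro ⟨v, hvA, hr⟩ o ho hxo
    refine ⟨v, ho hxo hr, hvA, ?_⟩
    intro h
    rw [Set.mem_singleton_iff] at h
    subst h
    exact hirrefl v hr
end

section
/- Let X be a set carrying two topologies τ_□ and τ_→ such that every τ_□-open set is τ_→-open. For Q ⊆ X define e_□(Q) = {x ∈ X : there is a τ_□-open set U with x ∈ U and U ∖ {x} ⊆ Q} (the complement of the τ_□-derived set of X ∖ Q). Then for all P, Q ⊆ X: e_□(Q) ⊆ P ∪ int_{τ_→}((X ∖ P) ∪ Q), where int_{τ_→} is the τ_→-interior. (Lemma 6.2: any derivative space induced from a tritopological space with τ_□ ⊆ τ_→ validates □q → p ∨ (p → q).) -/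
open Topology

/-- Lemma 6.2: let `X` carry two topologies `tb = τ_□` and `tr = τ_→` with
every `τ_□`-open set `τ_→`-open.  Define `e_□ Q` as the set of points having a `τ_□`-open
neighbourhood `U` with `U \ {x} ⊆ Q` (the coderivative of `τ_□`).  Then
`e_□ Q ⊆ P ∪ int_{τ_→}(Pᶜ ∪ Q)` for all `P, Q ⊆ X`, i.e. the space validates
`□q → p ∨ (p → q)`. -/
theorem coderivative_subset {X : Type*} (tb tr : TopologicalSpace X)
    (hsub : ∀ U : Set X, IsOpen[tb] U → IsOpen[tr] U) :
    ∀ P Q : Set X,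
      {x | ∃ U : Set X, IsOpen[tb] U ∧ x ∈ U ∧ U \ {x} ⊆ Q} ⊆
        P ∪ @interior X tr (Pᶜ ∪ Q) := by
  letI := tr
  intro P Q x ⟨U, hU, hxU, hUQ⟩
  by_cases hxP : x ∈ P
  · exact Or.inl hxP
  · refine Or.inr (interior_mono (s := U) ?_ ?_)
    · intro y hy
      by_cases hyx : y = x
      · exact Or.inl (hyx ▸ hxP)
      · exact Or.inr (hUQ ⟨hy, hyx⟩)
    · rwa [(hsub U hU).interior_eq]
end

section
/- Let ≼ be a preorder and ⊏ a transitive relation on a set W, let ≪ be the transitive closure of the composite (≼;⊏), and suppose the pair is backward confluent: w ⊏ v ≼ v' implies there is w' with w ≼ w' ⊏ v'. Then for every X ⊆ W: i_≼(e_⊏(X)) = e_≪(i_≼(X)). (Proposition 6.6(1): backward confluent frames give rise to ◇-coarse spaces.) -/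
/-- Proposition 6.6(1): for a preorder `≼` and a transitive relation `⊏`
which are backward confluent, with `≪` the transitive closure of `(≼;⊏)`:
`i_≼ (e_⊏ X) = e_≪ (i_≼ X)` for every `X ⊆ W`  (◇-coarseness). -/
theorem backward_confluent_coarse {W : Type*} (pre mod : W → W → Prop)
    (hpre_refl : ∀ w, pre w w)
    (hpre_trans : ∀ {a b c}, pre a b → pre b c → pre a c)
    (hmod_trans : ∀ {a b c}, mod a b → mod b c → mod a c)
    (hback : ∀ {w v v'}, mod w v → pre v v' → ∃ w', pre w w' ∧ mod w' v') :
    ∀ X : Set W,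
      {w | ∀ v, pre w v → v ∈ {u | ∀ t, mod u t → t ∈ X}} =
      {w | ∀ v, Relation.TransGen (fun a b => ∃ u, pre a u ∧ mod u b) w v →
        v ∈ {u | ∀ t, pre u t → t ∈ X}} := by
  intro X
  ext w
  simp only [Set.mem_setOf_eq]
  constructor
  · intro h v hv
    suffices H : (∀ s, pre v s → ∀ t, mod s t → t ∈ X) ∧ (∀ t, pre v t → t ∈ X) from H.2
    induction hv with
    | single hstep =>
      obtain ⟨u, hwu, huv⟩ := hstep
      constructor
      · intro s hvs t hst
        obtain ⟨u', huu', hu's⟩ := hback huv hvs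
        exact h u' (hpre_trans hwu huu') t (hmod_trans hu's hst)
      · intro t hvt
        obtain ⟨w', huw', hw't⟩ := hback huv hvt
        exact h w' (hpre_trans hwu huw') t hw't
    | tail _ hstep ih =>
      obtain ⟨u, hbu, huc⟩ := hstep
      constructor
      · intro s hcs t hst
        obtain ⟨u', huu', hu's⟩ := hback huc hcs
        exact ih.1 u' (hpre_trans hbu huu') t (hmod_trans hu's hst)
      · intro t hct
        obtain ⟨w', huw', hw't⟩ := hback huc hct
        exact ih.1 w' (hpre_trans hbu huw') t hw't
  · intro h v hwv t hvt
    exact h t (Relation.TransGen.single ⟨v, hwv, hvt⟩) t (hpre_refl t)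
end

section
/- Let ≼ be a preorder and ⊏ a transitive relation on a set W, and suppose the pair is forward confluent: whenever w ⊏ v and w ≼ w', there is v' with w' ⊏ v' and v ≼ v'. Then for every X ⊆ W: d_⊏(i_≼(X)) = i_≼(d_⊏(i_≼(X))). (Proposition 6.6(2): forward confluent frames give rise to ◇-regular spaces.) -/
/-- Proposition 6.6(2): for a preorder `≼` and a transitive relation `⊏`
which are forward confluent: `d_⊏ (i_≼ X) = i_≼ (d_⊏ (i_≼ X))` for every `X ⊆ W`
(◇-regularity). -/
theorem forward_confluent_regular {W : Type*} (pre mod : W → W → Prop)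
    (hpre_refl : ∀ w, pre w w)
    (hpre_trans : ∀ {a b c}, pre a b → pre b c → pre a c)
    (hmod_trans : ∀ {a b c}, mod a b → mod b c → mod a c)
    (hforward : ∀ {w v w'}, mod w v → pre w w' → ∃ v', mod w' v' ∧ pre v v') :
    ∀ X : Set W,
      {w | ∃ v, mod w v ∧ v ∈ {u | ∀ t, pre u t → t ∈ X}} =
      {w | ∀ v, pre w v → v ∈ {u | ∃ s, mod u s ∧ s ∈ {r | ∀ t, pre r t → t ∈ X}}} := by
  intro X
  ext w
  constructor
  · rintro ⟨v, hwv, hv⟩ w' hww'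
    obtain ⟨v', hw'v', hvv'⟩ := hforward hwv hww'
    exact ⟨v', hw'v', fun t ht => hv t (hpre_trans hvv' ht)⟩
  · intro h
    exact h w (hpre_refl w)
end

section
/- Let ≼ be a preorder and ⊏ a transitive relation on a set W, let ≪ be the transitive closure of the composite (≼;⊏), and suppose the pair is downward confluent: w ≼ v ⊏ v' implies there is w' with w ⊏ w' ≼ v'. Then for every X ⊆ W: e_⊏(i_≼(X)) = e_≪(i_≼(X)). (Proposition 6.6(3): downward confluent frames give rise to □-regular spaces.) -/
/-- Proposition 6.6(3): for a preorder `≼` and a transitive relation `⊏`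
which are downward confluent, with `≪` the transitive closure of `(≼;⊏)`:
`e_⊏ (i_≼ X) = e_≪ (i_≼ X)` for every `X ⊆ W`  (□-regularity). -/
theorem downward_confluent_box_regular {W : Type*} (pre mod : W → W → Prop)
    (hpre_refl : ∀ w, pre w w)
    (hpre_trans : ∀ {a b c}, pre a b → pre b c → pre a c)
    (hmod_trans : ∀ {a b c}, mod a b → mod b c → mod a c)
    (hdown : ∀ {w v v'}, pre w v → mod v v' → ∃ w', mod w w' ∧ pre w' v') :
    ∀ X : Set W,
      {w | ∀ v, mod w v → v ∈ {u | ∀ t, pre u t → t ∈ X}} =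
      {w | ∀ v, Relation.TransGen (fun a b => ∃ u, pre a u ∧ mod u b) w v →
        v ∈ {u | ∀ t, pre u t → t ∈ X}} := by
  intro X
  ext w
  simp only [Set.mem_setOf_eq]
  constructor
  · intro h v hv
    have key : ∃ b, mod w b ∧ pre b v := by
      induction hv with
      | single hstep =>
          obtain ⟨u, hpu, hmu⟩ := hstep
          exact hdown hpu hmu
      | tail _ hstep ih =>
          obtain ⟨b, hmb, hpb⟩ := ih
          obtain ⟨u, hpu, hmu⟩ := hstep
          obtain ⟨b', hmb', hpb'⟩ := hdown (hpre_trans hpb hpu) hmu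
          exact ⟨b', hmod_trans hmb hmb', hpb'⟩
    obtain ⟨b, hmb, hpb⟩ := key
    intro t hpt
    exact h b hmb t (hpre_trans hpb hpt)
  · intro h v hv
    exact h v (Relation.TransGen.single ⟨w, hpre_refl w, hv⟩)
end

section
/- Let M = ⟨W, ≼, ⊏, V⟩ be a birelational CK4-model. Define M^irr on the set W × ℤ by: (w,n) ≼' (v,m) iff w ≼ v; (w,n) ⊏' (v,m) iff w ⊏ v and n < m; and V'(p) = {(w,n) : w ∈ V(p)}. Then: (i) ≼' is a preorder and ⊏' is transitive and irreflexive, so M^irr is a birelational CK4-model with irreflexive modal relation; (ii) if M is forward confluent (resp. backward confluent, downward confluent, locally linear), so is M^irr; and (iii) for every formula φ, every w ∈ W and every n ∈ ℤ: M^irr, (w,n) ⊨ φ if and only if M, w ⊨ φ. (The irreflexivization construction in the proof of Theorem 6.8.) -/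
/-- Modal formulas of intuitionistic modal logic. -/
inductive Fml : Type where
  | bot : Fml
  | var : ℕ → Fml
  | and : Fml → Fml → Fml
  | or : Fml → Fml → Fml
  | imp : Fml → Fml → Fml
  | box : Fml → Fml
  | dia : Fml → Fml

/-- The relation `≪`, the transitive closure of the composite `(≼;⊏)`. -/
def ll {W : Type*} (pre mod : W → W → Prop) : W → W → Prop :=
  Relation.TransGen (fun a b => ∃ u, pre a u ∧ mod u b)

/-- Satisfaction in a birelational model. -/
def Sat {W : Type*} (pre mod : W → W → Prop) (V : ℕ → Set W) : Fml → W → Prop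
  | .bot, _ => False
  | .var n, w => w ∈ V n
  | .and φ ψ, w => Sat pre mod V φ w ∧ Sat pre mod V ψ w
  | .or φ ψ, w => Sat pre mod V φ w ∨ Sat pre mod V ψ w
  | .imp φ ψ, w => ∀ v, pre w v → Sat pre mod V φ v → Sat pre mod V ψ v
  | .box φ, w => ∀ v, ll pre mod w v → Sat pre mod V φ v
  | .dia φ, w => ∀ v, pre w v → ∃ u, mod v u ∧ Sat pre mod V φ u

def Forward {W : Type*} (pre mod : W → W → Prop) : Prop :=
  ∀ {w v w'}, mod w v → pre w w' → ∃ v', mod w' v' ∧ pre v v'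

def Backward {W : Type*} (pre mod : W → W → Prop) : Prop :=
  ∀ {w v v'}, mod w v → pre v v' → ∃ w', pre w w' ∧ mod w' v'

def Downward {W : Type*} (pre mod : W → W → Prop) : Prop :=
  ∀ {w v v'}, pre w v → mod v v' → ∃ w', mod w w' ∧ pre w' v'

def LocLinear {W : Type*} (pre : W → W → Prop) : Prop :=
  ∀ {w v u}, pre w v → pre w u → pre v u ∨ pre u v

/-- The intuitionistic relation of the irreflexivization `M^irr` on `W × ℤ`. -/
def irrPre {W : Type*} (pre : W → W → Prop) : W × ℤ → W × ℤ → Prop :=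
  fun a b => pre a.1 b.1

/-- The modal relation of the irreflexivization `M^irr` on `W × ℤ`. -/
def irrMod {W : Type*} (mod : W → W → Prop) : W × ℤ → W × ℤ → Prop :=
  fun a b => mod a.1 b.1 ∧ a.2 < b.2

/-- The valuation of the irreflexivization `M^irr`. -/
def irrVal {W : Type*} (V : ℕ → Set W) : ℕ → Set (W × ℤ) :=
  fun n => {a | a.1 ∈ V n}

lemma ll_irr_to {W : Type*} {pre mod : W → W → Prop} {a b : W × ℤ}
    (h : ll (irrPre pre) (irrMod mod) a b) : ll pre mod a.1 b.1 := by
  induction h with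
  | single h => obtain ⟨u, h1, h2⟩ := h; exact Relation.TransGen.single ⟨u.1, h1, h2.1⟩
  | tail _ h ih => obtain ⟨u, h1, h2⟩ := h; exact Relation.TransGen.tail ih ⟨u.1, h1, h2.1⟩

lemma ll_to_irr {W : Type*} {pre mod : W → W → Prop} {w v : W}
    (h : ll pre mod w v) : ∀ n : ℤ, ∃ m, ll (irrPre pre) (irrMod mod) (w, n) (v, m) := by
  induction h with
  | single h =>
    intro n
    obtain ⟨u, h1, h2⟩ := h
    exact ⟨n + 1, Relation.TransGen.single ⟨(u, n), h1, h2, by omega⟩⟩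
  | tail _ h ih =>
    intro n
    obtain ⟨m, hm⟩ := ih n
    obtain ⟨u, h1, h2⟩ := h
    exact ⟨m + 1, Relation.TransGen.tail hm ⟨(u, m), h1, h2, by omega⟩⟩

/-- irreflexivization, Theorem 6.8: given a birelational CK4-model
`M = ⟨W, ≼, ⊏, V⟩`, the model `M^irr` on `W × ℤ` is a CK4-model with irreflexive modal
relation, inherits the confluence/linearity properties of `M`, and satisfies exactly the
same formulas: `M^irr, (w,n) ⊨ φ ↔ M, w ⊨ φ`. -/
theorem irreflexivization {W : Type*} (pre mod : W → W → Prop) (V : ℕ → Set W)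
    (hpre_refl : ∀ w, pre w w)
    (hpre_trans : ∀ {a b c}, pre a b → pre b c → pre a c)
    (hmod_trans : ∀ {a b c}, mod a b → mod b c → mod a c)
    (hval : ∀ n, ∀ {w v}, w ∈ V n → pre w v → v ∈ V n) :
    -- (i)  `M^irr` is a birelational CK4-model with irreflexive modal relation
    ((∀ a, irrPre pre a a)
      ∧ (∀ {a b c : W × ℤ}, irrPre pre a b → irrPre pre b c → irrPre pre a c)
      ∧ (∀ {a b c : W × ℤ}, irrMod mod a b → irrMod mod b c → irrMod mod a c)
      ∧ (∀ a : W × ℤ, ¬ irrMod mod a a)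
      ∧ (∀ n, ∀ {a b : W × ℤ}, a ∈ irrVal V n → irrPre pre a b → b ∈ irrVal V n))
    -- (ii) preservation of the frame conditions
    ∧ (Forward pre mod → Forward (irrPre pre) (irrMod mod))
    ∧ (Backward pre mod → Backward (irrPre pre) (irrMod mod))
    ∧ (Downward pre mod → Downward (irrPre pre) (irrMod mod))
    ∧ (LocLinear pre → LocLinear (irrPre (W := W) pre))
    -- (iii) `M^irr` and `M` satisfy the same formulas
    ∧ (∀ (φ : Fml) (w : W) (n : ℤ),
        Sat (irrPre pre) (irrMod mod) (irrVal V) φ (w, n) ↔ Sat pre mod V φ w) := by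
  refine ⟨⟨fun a => hpre_refl a.1, fun h1 h2 => hpre_trans h1 h2,
      fun h1 h2 => ⟨hmod_trans h1.1 h2.1, h1.2.trans h2.2⟩,
      fun a h => lt_irrefl _ h.2,
      fun n => fun {a b} h1 h2 => hval n h1 h2⟩, ?_, ?_, ?_, ?_, ?_⟩
  · intro hF a b a' ⟨h1, h2⟩ h3
    obtain ⟨v', hv1, hv2⟩ := hF h1 h3
    exact ⟨(v', a'.2 + 1), ⟨hv1, by omega⟩, hv2⟩
  · intro hB a b b' ⟨h1, h2⟩ h3
    obtain ⟨w', hw1, hw2⟩ := hB h1 h3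
    exact ⟨(w', b'.2 - 1), hw1, hw2, by omega⟩
  · intro hD a b b' h1 ⟨h2, h3⟩
    obtain ⟨w', hw1, hw2⟩ := hD h1 h2
    exact ⟨(w', a.2 + 1), ⟨hw1, by omega⟩, hw2⟩
  · intro hL a b c h1 h2
    exact hL h1 h2
  · intro φ
    induction φ with
    | bot => intro w n; simp [Sat]
    | var k => intro w n; simp [Sat, irrVal]
    | and φ ψ ihφ ihψ => intro w n; simp [Sat, ihφ, ihψ]
    | or φ ψ ihφ ihψ => intro w n; simp [Sat, ihφ, ihψ]
    | imp φ ψ ihφ ihψ =>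
      intro w n
      constructor
      · intro h v hv hφ
        exact (ihψ v n).mp (h (v, n) hv ((ihφ v n).mpr hφ))
      · intro h v hv hφ
        exact (ihψ v.1 v.2).mpr (h v.1 hv ((ihφ v.1 v.2).mp hφ))
    | box φ ih =>
      intro w n
      constructor
      · intro h v hv
        obtain ⟨m, hm⟩ := ll_to_irr hv n
        exact (ih v m).mp (h (v, m) hm)
      · intro h v hv
        exact (ih v.1 v.2).mpr (h v.1 (ll_irr_to hv))
    | dia φ ih =>
      intro w n
      constructor
      · intro h v hv
        obtain ⟨u, ⟨hu1, _⟩, hu2⟩ := h (v, n) hv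
        exact ⟨u.1, hu1, (ih u.1 u.2).mp hu2⟩
      · intro h v hv
        obtain ⟨u, hu1, hu2⟩ := h v.1 hv
        exact ⟨(u, v.2 + 1), ⟨hu1, by omega⟩, (ih u (v.2 + 1)).mpr hu2⟩
end

section
/- Let X be a finite topological space satisfying the T₀ separation axiom. Then for every subset A ⊆ X, the derived set of A is contained in the derived set of A ∖ (derived set of A), i.e. d(A) ⊆ d(A ∖ d(A)). (This is the semantic form of Löb's axiom □(□p→p)→□p; it underlies Proposition 6.9, that finite T₀ spaces validate Löb's axiom.) -/
/-- The derived set of `A`: points `x` all of whose open neighbourhoods meet `A \ {x}`. -/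
def dset {X : Type*} [TopologicalSpace X] (A : Set X) : Set X :=
  {x | x ∈ closure (A \ {x})}

lemma mem_closure_iff_spec {X : Type*} [TopologicalSpace X] [Finite X] (s : Set X) (x : X) :
    x ∈ closure s ↔ ∃ y ∈ s, y ⤳ x := by
  have h : s = ⋃ y ∈ s, {y} := by simp
  rw [h]
  simp_rw [closure_iUnion]
  simp [specializes_iff_mem_closure]

lemma mem_dset_iff {X : Type*} [TopologicalSpace X] [Finite X] (A : Set X) (x : X) :
    x ∈ dset A ↔ ∃ y ∈ A, y ≠ x ∧ y ⤳ x := by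
  simp only [dset, Set.mem_setOf_eq, mem_closure_iff_spec, Set.mem_diff,
    Set.mem_singleton_iff]
  tauto

/-- in a finite T₀ space, `d(A) ⊆ d(A \ d(A))` for every `A`
(the semantic form of Löb's axiom, Proposition 6.9). -/
theorem finite_t0_loeb {X : Type*} [TopologicalSpace X] [Finite X] [T0Space X]
    (A : Set X) : dset A ⊆ dset (A \ dset A) := by
  intro x hx
  rw [mem_dset_iff] at hx
  rw [mem_dset_iff]
  set S : Set X := {y | y ∈ A ∧ y ≠ x ∧ y ⤳ x} with hS
  obtain ⟨y₀, hy₀A, hy₀x, hy₀s⟩ := hx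
  have hSne : S.Nonempty := ⟨y₀, hy₀A, hy₀x, hy₀s⟩
  have hwf : WellFounded (fun a b : X => a ⤳ b ∧ a ≠ b) := by
    haveI : IsTrans X (fun a b : X => a ⤳ b ∧ a ≠ b) :=
      ⟨fun a b c hab hbc => ⟨hab.1.trans hbc.1, by
        rintro rfl; exact hab.2 (hab.1.antisymm hbc.1).eq⟩⟩
    haveI : IsIrrefl X (fun a b : X => a ⤳ b ∧ a ≠ b) := ⟨fun a h => h.2 rfl⟩
    exact Finite.wellFounded_of_trans_of_irrefl _
  obtain ⟨y, hyS, hymin⟩ := hwf.has_min S hSne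
  obtain ⟨hyA, hyx, hyspec⟩ := hyS
  refine ⟨y, ⟨hyA, ?_⟩, hyx, hyspec⟩
  intro hyd
  rw [mem_dset_iff] at hyd
  obtain ⟨w, hwA, hwy, hws⟩ := hyd
  have hwx : w ⤳ x := hws.trans hyspec
  have hwnex : w ≠ x := by
    rintro rfl
    exact hwy (hws.antisymm hyspec).eq
  exact hymin w ⟨hwA, hwnex, hwx⟩ ⟨hws, hwy⟩
end
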